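/- Consistency of the discrete Hamiltonian: let λ = λ(N) satisfy λ → 0 and Nλ → ∞ as N → ∞, r = (1+λ)/(1-λ), and H^N(x,y,z) = (1/(λ log r)) ((1+λ)/2 · r^{N(y-x)} + (1-λ)/2 · r^{N(y-z)} - 1). Let φ be C² in a neighbourhood of a point (x,t) and let x_N → x. Then H^N(φ(x_N - 1/N, t), φ(x_N, t), φ(x_N + 1/N, t)) → ∂_x φ(x,t) + (∂_x φ(x,t))², as N → ∞. -/

import Mathlib

open Real Filter

private lemma mvt_sub {g : ℝ → ℝ} {s : Set ℝ} (hs : Convex ℝ s)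
    (hg : ∀ y ∈ s, DifferentiableAt ℝ g y) {c C : ℝ}
    (hb : ∀ y ∈ s, |deriv g y - c| ≤ C) {u v : ℝ} (hu : u ∈ s) (hv : v ∈ s) :
    |g v - g u - c * (v - u)| ≤ C * |v - u| := by
  have key : ∀ y ∈ s, HasDerivWithinAt (fun y => g y - c * y) (deriv g y - c) s y := by
    intro y hy
    exact (((hg y hy).hasDerivAt).sub (by simpa using (hasDerivAt_id y).const_mul c)).hasDerivWithinAt
  have h := Convex.norm_image_sub_le_of_norm_hasDerivWithin_le key
    (fun y hy => by simpa [Real.norm_eq_abs] using hb y hy) hs hu hv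
  rw [Real.norm_eq_abs, Real.norm_eq_abs] at h
  calc |g v - g u - c * (v - u)| = |(g v - c * v) - (g u - c * u)| := by congr 1; ring
    _ ≤ C * |v - u| := h

private lemma exp_taylor2 {u : ℝ} (hu : |u| ≤ 1) :
    |Real.exp u - 1 - u - u ^ 2 / 2| ≤ |u| ^ 3 * (2 / 9) := by
  have h := Real.exp_bound hu (n := 3) (by norm_num)
  have e1 : ∑ m ∈ Finset.range 3, u ^ m / (Nat.factorial m) = 1 + u + u ^ 2 / 2 := by
    simp [Finset.sum_range_succ, Nat.factorial]
  rw [e1] at h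
  have e2 : Real.exp u - 1 - u - u ^ 2 / 2 = Real.exp u - (1 + u + u ^ 2 / 2) := by ring
  rw [e2]
  refine h.trans (le_of_eq ?_)
  norm_num [Nat.factorial]

private lemma log_ratio_slope (lam : ℕ → ℝ) (hlam : ∀ N, lam N ∈ Set.Ioo (0:ℝ) 1)
    (hlam0 : Tendsto lam atTop (nhds 0)) :
    Tendsto (fun N => Real.log ((1 + lam N) / (1 - lam N)) / lam N) atTop (nhds 2) := by
  have h1 : HasDerivAt (fun s : ℝ => (1 + s) / (1 - s)) 2 0 := by
    have ha : HasDerivAt (fun s : ℝ => 1 + s) 1 0 := by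
      simpa using (hasDerivAt_id (0:ℝ)).const_add 1
    have hb : HasDerivAt (fun s : ℝ => 1 - s) (-1) 0 := by
      simpa using (hasDerivAt_id (0:ℝ)).const_sub 1
    have h := ha.div hb (by norm_num)
    exact h.congr_deriv (by norm_num)
  have hlog : HasDerivAt (fun s : ℝ => Real.log ((1 + s) / (1 - s))) 2 0 := by
    have h := h1.log (by norm_num)
    convert h using 1
    norm_num
  have hslope := hasDerivAt_iff_tendsto_slope.mp hlog
  have hlam' : Tendsto lam atTop (nhdsWithin (0:ℝ) {(0:ℝ)}ᶜ) := by
    refine tendsto_nhdsWithin_iff.mpr ⟨hlam0, Eventually.of_forall fun N => ?_⟩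
    exact ne_of_gt (hlam N).1
  have h := hslope.comp hlam'
  refine h.congr fun N => ?_
  simp [slope_def_field, Function.comp]

private lemma strict_quot {g : ℝ → ℝ} {x p : ℝ} (hg : HasStrictDerivAt g p x)
    {u v : ℕ → ℝ} (hu : Tendsto u atTop (nhds x)) (hv : Tendsto v atTop (nhds x))
    {c : ℕ → ℝ} (hvc : ∀ᶠ N in atTop, (v N - u N) * c N = 1) :
    Tendsto (fun N => c N * (g (v N) - g (u N))) atTop (nhds p) := by
  rw [Metric.tendsto_nhds]
  intro η hη
  have ho := hg.isLittleO
  have hev := ho.def (show (0:ℝ) < η/2 by linarith)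
  have htend : Tendsto (fun N => (v N, u N)) atTop (nhds (x, x)) := hv.prodMk_nhds hu
  filter_upwards [htend.eventually hev, hvc] with N hN hvcN
  have h1 : c N * (g (v N) - g (u N)) - p = c N * (g (v N) - g (u N) - (v N - u N) * p) := by
    linear_combination p * hvcN
  rw [Real.dist_eq, h1, abs_mul]
  have h2 : |g (v N) - g (u N) - (v N - u N) * p| ≤ η/2 * |v N - u N| := by
    simpa [Real.norm_eq_abs, smul_eq_mul] using hN
  calc |c N| * |g (v N) - g (u N) - (v N - u N) * p|
      ≤ |c N| * (η/2 * |v N - u N|) := mul_le_mul_of_nonneg_left h2 (abs_nonneg _)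
    _ = η/2 * |(v N - u N) * c N| := by rw [abs_mul]; ring
    _ = η/2 := by rw [hvcN]; simp
    _ < η := by linarith

private lemma main_aux (lam L a b : ℕ → ℝ) (p : ℝ)
    (hlpos : ∀ N, 0 < lam N) (hLpos : ∀ N, 0 < L N)
    (hlam0 : Tendsto lam atTop (nhds 0))
    (hLl : Tendsto (fun N => L N / lam N) atTop (nhds 2))
    (hA : Tendsto a atTop (nhds p)) (hB : Tendsto b atTop (nhds (-p)))
    (hab : Tendsto (fun N => (a N + b N) / lam N) atTop (nhds 0)) :
    Tendsto (fun N => 1 / (lam N * L N) *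
      ((1 + lam N) / 2 * Real.exp (L N * a N) + (1 - lam N) / 2 * Real.exp (L N * b N) - 1))
      atTop (nhds (p + p ^ 2)) := by
  have hL0 : Tendsto L atTop (nhds 0) := by
    have h := hLl.mul hlam0
    rw [mul_zero] at h
    exact h.congr fun N => div_mul_cancel₀ _ (ne_of_gt (hlpos N))
  have hsmall : ∀ (cseq : ℕ → ℝ) (q : ℝ), Tendsto cseq atTop (nhds q) →
      Tendsto (fun N => (Real.exp (L N * cseq N) - 1 - L N * cseq N - (L N * cseq N)^2/2) / (L N)^2)
      atTop (nhds 0) := by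
    intro cseq q hc
    have habs : Tendsto (fun N => L N * cseq N) atTop (nhds 0) := by
      simpa using hL0.mul hc
    have hev : ∀ᶠ N in atTop, |L N * cseq N| ≤ 1 := by
      refine habs.eventually (p := fun y => |y| ≤ 1) (Filter.eventually_iff.mpr ?_)
      have h := Metric.closedBall_mem_nhds (0:ℝ) one_pos
      simpa [Metric.closedBall, Real.dist_eq] using h
    apply squeeze_zero_norm' (a := fun N => 2/9 * |cseq N|^3 * L N)
    · filter_upwards [hev] with N hN
      have h := exp_taylor2 hN
      rw [Real.norm_eq_abs, abs_div, abs_of_pos (pow_pos (hLpos N) 2),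
        div_le_iff₀ (pow_pos (hLpos N) 2)]
      refine h.trans (le_of_eq ?_)
      rw [abs_mul, abs_of_pos (hLpos N)]
      ring
    · have h1 : Tendsto (fun N => |cseq N|) atTop (nhds |q|) := hc.abs
      have h2 := ((h1.pow 3).const_mul (2/9 : ℝ)).mul hL0
      simpa using h2
  have hE1 := hsmall a p hA
  have hE2 := hsmall b (-p) hB
  have hsq : Tendsto (fun N => a N ^ 2) atTop (nhds (p ^ 2)) := hA.pow 2
  have hsqb : Tendsto (fun N => b N ^ 2) atTop (nhds (p ^ 2)) := by
    simpa [neg_sq] using hB.pow 2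
  have hT := (((((((hE1.add hE2).mul hLl).div_const 2).add (hab.div_const 2)).add
      (((hsq.add hsqb).div_const 4).mul hLl)).add
      (((hE1.sub hE2).mul hL0).div_const 2)).add
      ((hA.sub hB).div_const 2)).add
      (((hsq.sub hsqb).div_const 4).mul hL0)
  have hT' : Tendsto (fun N =>
      ((Real.exp (L N * a N) - 1 - L N * a N - (L N * a N)^2/2) / (L N)^2
        + (Real.exp (L N * b N) - 1 - L N * b N - (L N * b N)^2/2) / (L N)^2) * (L N / lam N) / 2
      + (a N + b N) / lam N / 2
      + (a N ^ 2 + b N ^ 2) / 4 * (L N / lam N)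
      + ((Real.exp (L N * a N) - 1 - L N * a N - (L N * a N)^2/2) / (L N)^2
        - (Real.exp (L N * b N) - 1 - L N * b N - (L N * b N)^2/2) / (L N)^2) * L N / 2
      + (a N - b N) / 2
      + (a N ^ 2 - b N ^ 2) / 4 * L N) atTop (nhds (p + p ^ 2)) := by
    convert hT using 2
    ring
  refine hT'.congr fun N => ?_
  have h1 : lam N ≠ 0 := ne_of_gt (hlpos N)
  have h2 : L N ≠ 0 := ne_of_gt (hLpos N)
  field_simp
  ring

/-- Consistency of the discrete Hamiltonian: it converges to
`∂_x φ + (∂_x φ)²` as `N → ∞`, when `λ → 0` and `Nλ → ∞`. -/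
theorem discrete_hamiltonian_consistency
    (lam : ℕ → ℝ) (hlam : ∀ N, lam N ∈ Set.Ioo (0:ℝ) 1)
    (hlam0 : Tendsto lam atTop (nhds 0))
    (hNlam : Tendsto (fun N : ℕ => (N : ℝ) * lam N) atTop atTop)
    (φ : ℝ × ℝ → ℝ) (x t : ℝ) (V : Set (ℝ × ℝ)) (hV : V ∈ nhds (x, t))
    (hφ : ContDiffOn ℝ 2 φ V)
    (xN : ℕ → ℝ) (hxN : Tendsto xN atTop (nhds x)) :
    Tendsto (fun N : ℕ =>
      1 / (lam N * Real.log ((1 + lam N) / (1 - lam N))) *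
        ((1 + lam N) / 2 * ((1 + lam N) / (1 - lam N)) ^
            ((N : ℝ) * (φ (xN N, t) - φ (xN N - 1 / N, t))) +
         (1 - lam N) / 2 * ((1 + lam N) / (1 - lam N)) ^
            ((N : ℝ) * (φ (xN N, t) - φ (xN N + 1 / N, t))) - 1))
      atTop
      (nhds (fderiv ℝ φ (x, t) (1, 0) + (fderiv ℝ φ (x, t) (1, 0)) ^ 2)) := by
  have hlpos : ∀ N, 0 < lam N := fun N => (hlam N).1
  have hl1 : ∀ N, lam N < 1 := fun N => (hlam N).2
  have hrpos : ∀ N, (0:ℝ) < (1 + lam N) / (1 - lam N) := fun N =>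
    div_pos (by linarith [hlpos N]) (by linarith [hl1 N])
  have hr1 : ∀ N, 1 < (1 + lam N) / (1 - lam N) := fun N =>
    (one_lt_div (by linarith [hl1 N])).mpr (by linarith [hlpos N])
  have hLpos : ∀ N, 0 < Real.log ((1 + lam N) / (1 - lam N)) := fun N => Real.log_pos (hr1 N)
  have hLl := log_ratio_slope lam hlam hlam0
  -- the 1D function
  have hg2 : ContDiffAt ℝ 2 (fun y : ℝ => φ (y, t)) x :=
    (hφ.contDiffAt hV).comp x (contDiff_prodMk_left t).contDiffAt
  have hstrict : HasStrictDerivAt (fun y : ℝ => φ (y, t))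
      (deriv (fun y : ℝ => φ (y, t)) x) x :=
    hg2.hasStrictDerivAt (by norm_num)
  have hpeq : deriv (fun y : ℝ => φ (y, t)) x = fderiv ℝ φ (x, t) (1, 0) := by
    have hι : HasFDerivAt (fun y : ℝ => (y, t)) ((ContinuousLinearMap.id ℝ ℝ).prod 0) x :=
      HasFDerivAt.prodMk (hasFDerivAt_id x) (hasFDerivAt_const t x)
    have hφd : DifferentiableAt ℝ φ (x, t) := (hφ.contDiffAt hV).differentiableAt (by norm_num)
    have hcomp : HasDerivAt (fun y : ℝ => φ (y, t))
        (((fderiv ℝ φ (x, t)).comp ((ContinuousLinearMap.id ℝ ℝ).prod 0)) 1) x :=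
      (hφd.hasFDerivAt.comp x hι).hasDerivAt
    rw [hcomp.deriv]
    simp
  -- convergence of the discrete gradients
  have hone : Tendsto (fun N : ℕ => 1/(N:ℝ)) atTop (nhds 0) := tendsto_one_div_atTop_nhds_zero_nat
  have huminus : Tendsto (fun N => xN N - 1/(N:ℝ)) atTop (nhds x) := by
    simpa using hxN.sub hone
  have huplus : Tendsto (fun N => xN N + 1/(N:ℝ)) atTop (nhds x) := by
    simpa using hxN.add hone
  have hNne : ∀ᶠ N : ℕ in atTop, ((N:ℝ) ≠ 0) := by
    filter_upwards [eventually_ge_atTop 1] with N hN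
    exact Nat.cast_ne_zero.mpr (by omega)
  have hA : Tendsto (fun N : ℕ => (N:ℝ) * (φ (xN N, t) - φ (xN N - 1/(N:ℝ), t)))
      atTop (nhds (deriv (fun y : ℝ => φ (y, t)) x)) := by
    refine strict_quot hstrict huminus hxN ?_
    filter_upwards [hNne] with N hN
    rw [sub_sub_cancel, one_div_mul_cancel hN]
  have hB : Tendsto (fun N : ℕ => (N:ℝ) * (φ (xN N, t) - φ (xN N + 1/(N:ℝ), t)))
      atTop (nhds (-(deriv (fun y : ℝ => φ (y, t)) x))) := by
    have h1 : Tendsto (fun N : ℕ => (N:ℝ) * (φ (xN N + 1/(N:ℝ), t) - φ (xN N, t)))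
        atTop (nhds (deriv (fun y : ℝ => φ (y, t)) x)) := by
      refine strict_quot hstrict hxN huplus ?_
      filter_upwards [hNne] with N hN
      rw [add_sub_cancel_left, one_div_mul_cancel hN]
    exact h1.neg.congr fun N => by ring
  -- second-order bound for a + b
  have hab : Tendsto (fun N : ℕ => ((N:ℝ) * (φ (xN N, t) - φ (xN N - 1/(N:ℝ), t))
      + (N:ℝ) * (φ (xN N, t) - φ (xN N + 1/(N:ℝ), t))) / lam N) atTop (nhds 0) := by
    obtain ⟨u, hu, hgu⟩ := hg2.contDiffOn (le_refl 2) (by simp)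
    obtain ⟨ε, hε, hball⟩ := Metric.mem_nhds_iff.mp hu
    have hgs : ContDiffOn ℝ 2 (fun y : ℝ => φ (y, t)) (Metric.ball x ε) := hgu.mono hball
    have hsopen : IsOpen (Metric.ball x ε) := Metric.isOpen_ball
    have hdiff : ∀ y ∈ Metric.ball x ε, DifferentiableAt ℝ (fun y : ℝ => φ (y, t)) y := fun y hy =>
      ((hgs.contDiffAt (hsopen.mem_nhds hy)).differentiableAt (by norm_num))
    have hg' : ContDiffOn ℝ 1 (deriv (fun y : ℝ => φ (y, t))) (Metric.ball x ε) :=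
      hgs.deriv_of_isOpen hsopen (by norm_num)
    have hg'diff : ∀ y ∈ Metric.ball x ε, DifferentiableAt ℝ (deriv (fun y : ℝ => φ (y, t))) y :=
      fun y hy => ((hg'.contDiffAt (hsopen.mem_nhds hy)).differentiableAt (by norm_num))
    have hK : Metric.closedBall x (ε/2) ⊆ Metric.ball x ε := by
      intro y hy
      simp only [Metric.mem_closedBall] at hy
      exact Metric.mem_ball.mpr (lt_of_le_of_lt hy (by linarith))
    have hg''cont : ContinuousOn (deriv (deriv (fun y : ℝ => φ (y, t)))) (Metric.ball x ε) :=
      (hg'.deriv_of_isOpen (m := 0) hsopen (by norm_num)).continuousOn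
    obtain ⟨M, hM⟩ := (isCompact_closedBall x (ε/2)).exists_bound_of_continuousOn
      (hg''cont.mono hK)
    have hM0 : 0 ≤ M :=
      le_trans (norm_nonneg _) (hM x (Metric.mem_closedBall_self (by positivity)))
    have hLip : ∀ u_ ∈ Metric.closedBall x (ε/2), ∀ v_ ∈ Metric.closedBall x (ε/2),
        |deriv (fun y : ℝ => φ (y, t)) u_ - deriv (fun y : ℝ => φ (y, t)) v_| ≤ M * |u_ - v_| := by
      intro u_ hu_ v_ hv_
      have h := Convex.norm_image_sub_le_of_norm_deriv_le
        (f := deriv (fun y : ℝ => φ (y, t)))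
        (fun y hy => hg'diff y (hK hy)) (fun y hy => hM y hy)
        (convex_closedBall x (ε/2)) hv_ hu_
      simpa [Real.norm_eq_abs] using h
    apply squeeze_zero_norm' (a := fun N : ℕ => 2 * M * (((N:ℝ) * lam N)⁻¹))
    · filter_upwards [Metric.tendsto_nhds.mp hxN (ε/4) (by positivity),
        hone.eventually (p := fun y => y < ε/4) (eventually_lt_nhds (by positivity)),
        eventually_ge_atTop 1] with N h1 h2 h3
      have hNpos : (0:ℝ) < N := by exact_mod_cast Nat.pos_of_ne_zero (by omega)
      have hNinv : (0:ℝ) < 1/(N:ℝ) := by positivity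
      have hxNd : |xN N - x| < ε/4 := by rw [← Real.dist_eq]; exact h1
      have hsub3 : Metric.closedBall (xN N) (1/(N:ℝ)) ⊆ Metric.closedBall x (ε/2) := by
        intro y hy
        simp only [Metric.mem_closedBall, Real.dist_eq] at hy ⊢
        calc |y - x| ≤ |y - xN N| + |xN N - x| := abs_sub_le _ _ _
          _ ≤ 1/(N:ℝ) + ε/4 := by gcongr
          _ ≤ ε/2 := by linarith
      have hmemc : xN N ∈ Metric.closedBall (xN N) (1/(N:ℝ)) :=
        Metric.mem_closedBall_self (le_of_lt hNinv)
      have hmemm : xN N - 1/(N:ℝ) ∈ Metric.closedBall (xN N) (1/(N:ℝ)) := by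
        simp only [Metric.mem_closedBall, Real.dist_eq]
        rw [show xN N - 1/(N:ℝ) - xN N = -(1/(N:ℝ)) by ring, abs_neg, abs_of_pos hNinv]
      have hmemp : xN N + 1/(N:ℝ) ∈ Metric.closedBall (xN N) (1/(N:ℝ)) := by
        simp only [Metric.mem_closedBall, Real.dist_eq]
        rw [show xN N + 1/(N:ℝ) - xN N = 1/(N:ℝ) by ring, abs_of_pos hNinv]
      have hbound : ∀ y ∈ Metric.closedBall (xN N) (1/(N:ℝ)),
          |deriv (fun y : ℝ => φ (y, t)) y - deriv (fun y : ℝ => φ (y, t)) (xN N)|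
            ≤ M * (1/(N:ℝ)) := by
        intro y hy
        have h := hLip y (hsub3 hy) (xN N) (hsub3 hmemc)
        refine h.trans ?_
        have := Metric.mem_closedBall.mp hy
        rw [Real.dist_eq] at this
        exact mul_le_mul_of_nonneg_left this hM0
      have hdiff3 : ∀ y ∈ Metric.closedBall (xN N) (1/(N:ℝ)),
          DifferentiableAt ℝ (fun y : ℝ => φ (y, t)) y :=
        fun y hy => hdiff y (hK (hsub3 hy))
      have hmvt1 := mvt_sub (convex_closedBall (xN N) (1/(N:ℝ))) hdiff3 hbound hmemm hmemc
      have hmvt2 := mvt_sub (convex_closedBall (xN N) (1/(N:ℝ))) hdiff3 hbound hmemp hmemc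
      rw [show xN N - (xN N - 1/(N:ℝ)) = 1/(N:ℝ) by ring, abs_of_pos hNinv] at hmvt1
      rw [show xN N - (xN N + 1/(N:ℝ)) = -(1/(N:ℝ)) by ring, abs_neg, abs_of_pos hNinv] at hmvt2
      have hNr : (N:ℝ) ≠ 0 := ne_of_gt hNpos
      have e : ((N:ℝ) * (φ (xN N, t) - φ (xN N - 1/(N:ℝ), t))
          + (N:ℝ) * (φ (xN N, t) - φ (xN N + 1/(N:ℝ), t)))
          = (N:ℝ) * (((fun y : ℝ => φ (y, t)) (xN N) - (fun y : ℝ => φ (y, t)) (xN N - 1/(N:ℝ))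
              - deriv (fun y : ℝ => φ (y, t)) (xN N) * (1/(N:ℝ)))
            + ((fun y : ℝ => φ (y, t)) (xN N) - (fun y : ℝ => φ (y, t)) (xN N + 1/(N:ℝ))
              - deriv (fun y : ℝ => φ (y, t)) (xN N) * (-(1/(N:ℝ))))) := by
        simp only
        ring
      rw [Real.norm_eq_abs, abs_div, abs_of_pos (hlpos N), e, abs_mul, abs_of_pos hNpos]
      have habs2 : |(((fun y : ℝ => φ (y, t)) (xN N) - (fun y : ℝ => φ (y, t)) (xN N - 1/(N:ℝ))
              - deriv (fun y : ℝ => φ (y, t)) (xN N) * (1/(N:ℝ)))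
            + ((fun y : ℝ => φ (y, t)) (xN N) - (fun y : ℝ => φ (y, t)) (xN N + 1/(N:ℝ))
              - deriv (fun y : ℝ => φ (y, t)) (xN N) * (-(1/(N:ℝ)))))|
          ≤ M * (1/(N:ℝ)) * (1/(N:ℝ)) + M * (1/(N:ℝ)) * (1/(N:ℝ)) :=
        (abs_add_le _ _).trans (add_le_add hmvt1 hmvt2)
      have hlr : lam N ≠ 0 := (hlpos N).ne'
      refine le_trans ((div_le_div_iff_of_pos_right (hlpos N)).mpr
        (mul_le_mul_of_nonneg_left habs2 hNpos.le)) (le_of_eq ?_)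
      field_simp
      ring
    · have h := hNlam.inv_tendsto_atTop
      have h2 := h.const_mul (2*M)
      simpa using h2
  -- assemble
  have key := main_aux lam (fun N => Real.log ((1 + lam N) / (1 - lam N)))
    (fun N : ℕ => (N:ℝ) * (φ (xN N, t) - φ (xN N - 1/(N:ℝ), t)))
    (fun N : ℕ => (N:ℝ) * (φ (xN N, t) - φ (xN N + 1/(N:ℝ), t)))
    (deriv (fun y : ℝ => φ (y, t)) x)
    hlpos hLpos hlam0 hLl hA hB hab
  rw [← hpeq]
  refine key.congr fun N => ?_
  simp only [Real.rpow_def_of_pos (hrpos N)]
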